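/- Let Q_y ⊂ ℝⁿ be a nonempty compact convex set and f : ℝⁿ → ℝ a differentiable convex function that is L-smooth on Q_y (L > 0). Let y* be a minimizer of f over Q_y and fix N ≥ 1. Suppose the sequences (y^k), (z^k), (u^k) in Q_y and (α_k), (A_k) in ℝ are produced by the fast gradient method: y⁰ = z⁰ = u⁰ ∈ Q_y, α₀ = A₀ = 0, and for k = 0, …, N−1: α_{k+1} is the largest root of A_k + α = L·α² (i.e. α_{k+1} = (1 + √(1 + 4·L·A_k))/(2L)), A_{k+1} = A_k + α_{k+1}, z^{k+1} = (α_{k+1}·u^k + A_k·y^k)/A_{k+1}, u^{k+1} = argmin_{y ∈ Q_y} { α_{k+1}·⟨∇f(z^{k+1}), y − z^{k+1}⟩ + (1/2)‖y − u^k‖₂² }, and y^{k+1} = (α_{k+1}·u^{k+1} + A_k·y^k)/A_{k+1}. Then f(y^N) − f(y*) ≤ 8·L·R²/(N+1)², where R² = (1/2)‖y⁰ − y*‖₂². -/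

import Mathlib

open scoped RealInnerProductSpace
open Filter Set Topology

section FGMaux

variable {E : Type*} [NormedAddCommGroup E] [InnerProductSpace ℝ E] [CompleteSpace E]

lemma fgm_lineDeriv (f : E → ℝ) (f' : E → E) (hdiff : ∀ y, HasGradientAt f (f' y) y)
    (x d : E) (t : ℝ) :
    HasDerivAt (fun s : ℝ => f (x + s • d)) ⟪f' (x + t • d), d⟫ t := by
  have h1 : HasDerivAt (fun s : ℝ => x + s • d) d t := by
    simpa using ((hasDerivAt_id t).smul_const d).const_add x
  have h2 := (hdiff (x + t • d)).hasFDerivAt.comp_hasDerivAt t h1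
  simp only [InnerProductSpace.toDual_apply_apply] at h2
  exact h2

lemma fgm_grad_ineq (f : E → ℝ) (f' : E → E) (hdiff : ∀ y, HasGradientAt f (f' y) y)
    (hconv : ConvexOn ℝ Set.univ f) (z x : E) :
    f z + ⟪f' z, x - z⟫ ≤ f x := by
  set g : ℝ → ℝ := fun s => f (z + s • (x - z)) with hg
  have hd : HasDerivAt g ⟪f' z, x - z⟫ 0 := by
    simpa using fgm_lineDeriv f f' hdiff z (x - z) 0
  have htend : Tendsto (slope g 0) (𝓝[>] 0) (𝓝 ⟪f' z, x - z⟫) :=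
    (hasDerivAt_iff_tendsto_slope.mp hd).mono_left
      (nhdsWithin_mono 0 (fun s hs => ne_of_gt hs))
  have hev : ∀ᶠ t in 𝓝[>] (0:ℝ), slope g 0 t ≤ f x - f z := by
    filter_upwards [Ioc_mem_nhdsGT_of_mem (by constructor <;> norm_num : (0:ℝ) ∈ Ico 0 1)]
      with t ht
    have hcomb := hconv.2 (mem_univ z) (mem_univ x) (by linarith [ht.2] : (0:ℝ) ≤ 1 - t)
      (le_of_lt ht.1) (by ring)
    have hgt : g t ≤ (1 - t) * f z + t * f x := by
      have : z + t • (x - z) = (1 - t) • z + t • x := by module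
      simpa [hg, this] using hcomb
    have : slope g 0 t = (g t - g 0) / t := by simp [slope_def_field]
    rw [this, div_le_iff₀ ht.1]
    have hg0 : g 0 = f z := by simp [hg]
    rw [hg0]
    nlinarith [hgt]
  have := le_of_tendsto htend hev
  have hg1 : g 1 = f x := by simp [hg]
  linarith [this]

lemma fgm_descent (Q : Set E) (hQconv : Convex ℝ Q) (f : E → ℝ) (f' : E → E)
    (hdiff : ∀ y, HasGradientAt f (f' y) y) (L : ℝ) (hL : 0 < L)
    (hsmooth : ∀ y ∈ Q, ∀ z ∈ Q, ‖f' y - f' z‖ ≤ L * ‖y - z‖)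
    (a b : E) (ha : a ∈ Q) (hb : b ∈ Q) :
    f b ≤ f a + ⟪f' a, b - a⟫ + L / 2 * ‖b - a‖ ^ 2 := by
  set d := b - a with hd
  set φ : ℝ → ℝ :=
    fun t => f (a + t • d) - t * ⟪f' a, d⟫ - L / 2 * t ^ 2 * ‖d‖ ^ 2 with hφ
  have hφd : ∀ t : ℝ, HasDerivAt φ
      (⟪f' (a + t • d), d⟫ - ⟪f' a, d⟫ - L * t * ‖d‖ ^ 2) t := by
    intro t
    have h1 := fgm_lineDeriv f f' hdiff a d t
    have h2 : HasDerivAt (fun t : ℝ => t * ⟪f' a, d⟫) ⟪f' a, d⟫ t := by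
      simpa using (hasDerivAt_id t).mul_const ⟪f' a, d⟫
    have h3 : HasDerivAt (fun t : ℝ => L / 2 * t ^ 2 * ‖d‖ ^ 2) (L * t * ‖d‖ ^ 2) t := by
      have := ((hasDerivAt_pow 2 t).const_mul (L / 2)).mul_const (‖d‖ ^ 2)
      exact this.congr_deriv (by rw [show (2:ℕ) - 1 = 1 from rfl, pow_one]; push_cast; ring)
    exact (h1.sub h2).sub h3
  have hmem : ∀ t ∈ Icc (0:ℝ) 1, a + t • d ∈ Q := by
    intro t ht
    have := hQconv ha hb (by linarith [ht.2] : (0:ℝ) ≤ 1 - t) ht.1 (by ring)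
    have he : (1 - t) • a + t • b = a + t • d := by rw [hd]; module
    rwa [he] at this
  have hanti : AntitoneOn φ (Icc (0:ℝ) 1) := by
    apply antitoneOn_of_deriv_nonpos (convex_Icc 0 1)
    · exact (Continuous.continuousOn (by
        have : Differentiable ℝ φ := fun t => (hφd t).differentiableAt
        exact this.continuous))
    · intro t ht
      exact (hφd t).differentiableAt.differentiableWithinAt
    · intro t ht
      rw [interior_Icc] at ht
      rw [(hφd t).deriv]
      have hmem1 : a + t • d ∈ Q := hmem t ⟨ht.1.le, ht.2.le⟩
      have hinner : ⟪f' (a + t • d), d⟫ - ⟪f' a, d⟫ ≤ L * t * ‖d‖ ^ 2 := by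
        have h1 : ⟪f' (a + t • d) - f' a, d⟫ ≤ ‖f' (a + t • d) - f' a‖ * ‖d‖ :=
          real_inner_le_norm _ _
        have h2 : ‖f' (a + t • d) - f' a‖ ≤ L * ‖(a + t • d) - a‖ :=
          hsmooth _ hmem1 _ ha
        have h3 : ‖(a + t • d) - a‖ = t * ‖d‖ := by
          have he : (a + t • d) - a = t • d := by module
          rw [he, norm_smul, Real.norm_eq_abs, abs_of_pos ht.1]
        rw [inner_sub_left] at h1
        have h4 : ‖f' (a + t • d) - f' a‖ * ‖d‖ ≤ L * t * ‖d‖ * ‖d‖ := by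
          rw [h3] at h2
          exact mul_le_mul_of_nonneg_right (by linarith [h2]) (norm_nonneg d)
        nlinarith [h1, h4]
      linarith [hinner]
  have hfin := hanti (show (0:ℝ) ∈ Icc (0:ℝ) 1 by constructor <;> norm_num)
    (show (1:ℝ) ∈ Icc (0:ℝ) 1 by constructor <;> norm_num) zero_le_one
  have h0 : φ 0 = f a := by simp [hφ]
  have h1 : φ 1 = f b - ⟪f' a, d⟫ - L / 2 * ‖d‖ ^ 2 := by
    have hab : a + d = b := by rw [hd]; abel
    simp [hφ, hab]
  rw [h0, h1] at hfin
  linarith [hfin]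

end FGMaux

section FGMaux2

variable {E : Type*} [NormedAddCommGroup E] [InnerProductSpace ℝ E]

lemma fgm_combo_aux (p q : E) (t : ℝ) :
    ‖p + t • (q - p)‖ ^ 2 =
      (1 - t) * ‖p‖ ^ 2 + t * ‖q‖ ^ 2 - t * (1 - t) * ‖q - p‖ ^ 2 := by
  simp only [← real_inner_self_eq_norm_sq, inner_add_left, inner_add_right, inner_sub_left,
    inner_sub_right, real_inner_smul_left, real_inner_smul_right, real_inner_comm q p]
  ring

lemma fgm_norm_combo (x v w : E) (t : ℝ) :
    ‖x + t • (v - x) - w‖ ^ 2 =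
      (1 - t) * ‖x - w‖ ^ 2 + t * ‖v - w‖ ^ 2 - t * (1 - t) * ‖v - x‖ ^ 2 := by
  have h1 : x + t • (v - x) - w = (x - w) + t • ((v - w) - (x - w)) := by module
  have h2 : v - x = (v - w) - (x - w) := by module
  rw [h1, h2, fgm_combo_aux]

lemma fgm_strong_min (Q : Set E) (hQconv : Convex ℝ Q) (g u z x : E) (a : ℝ) (hx : x ∈ Q)
    (hmin : ∀ v ∈ Q, a * ⟪g, x - z⟫ + 1 / 2 * ‖x - u‖ ^ 2 ≤
      a * ⟪g, v - z⟫ + 1 / 2 * ‖v - u‖ ^ 2)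
    (v : E) (hv : v ∈ Q) :
    a * ⟪g, x - z⟫ + 1 / 2 * ‖x - u‖ ^ 2 + 1 / 2 * ‖v - x‖ ^ 2 ≤
      a * ⟪g, v - z⟫ + 1 / 2 * ‖v - u‖ ^ 2 := by
  have key : ∀ t : ℝ, 0 < t → t ≤ 1 →
      a * ⟪g, x - z⟫ + 1 / 2 * ‖x - u‖ ^ 2 + 1 / 2 * ‖v - x‖ ^ 2 ≤
        a * ⟪g, v - z⟫ + 1 / 2 * ‖v - u‖ ^ 2 + t * (1 / 2 * ‖v - x‖ ^ 2) := by
    intro t ht0 ht1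
    have hw : x + t • (v - x) ∈ Q := by
      have := hQconv hx hv (by linarith : (0:ℝ) ≤ 1 - t) ht0.le (by ring)
      have he : (1 - t) • x + t • v = x + t • (v - x) := by module
      rwa [he] at this
    have h := hmin _ hw
    have hin : ⟪g, x + t • (v - x) - z⟫ = ⟪g, x - z⟫ + t * ⟪g, v - x⟫ := by
      have he : x + t • (v - x) - z = (x - z) + t • (v - x) := by module
      rw [he, inner_add_right, inner_smul_right]
    have hvx : ⟪g, v - z⟫ = ⟪g, x - z⟫ + ⟪g, v - x⟫ := by
      have he : v - z = (x - z) + (v - x) := by module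
      rw [he, inner_add_right]
    rw [hin, fgm_norm_combo x v u t] at h
    have h2 : t * (a * ⟪g, x - z⟫ + 1 / 2 * ‖x - u‖ ^ 2 + 1 / 2 * ‖v - x‖ ^ 2) ≤
        t * (a * ⟪g, v - z⟫ + 1 / 2 * ‖v - u‖ ^ 2 + t * (1 / 2 * ‖v - x‖ ^ 2)) := by
      rw [hvx]; nlinarith [h]
    exact le_of_mul_le_mul_left h2 ht0
  refine le_of_forall_pos_le_add ?_
  intro ε hε
  have hc : (0:ℝ) ≤ 1 / 2 * ‖v - x‖ ^ 2 := by positivity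
  set c := 1 / 2 * ‖v - x‖ ^ 2 with hcdef
  have ht0 : 0 < min 1 (ε / (c + 1)) := by positivity
  have := key _ ht0 (min_le_left _ _)
  have hle : min 1 (ε / (c + 1)) * c ≤ ε := by
    have h1 : min 1 (ε / (c + 1)) ≤ ε / (c + 1) := min_le_right _ _
    have h2 : min 1 (ε / (c + 1)) * c ≤ (ε / (c + 1)) * c :=
      mul_le_mul_of_nonneg_right h1 hc
    have h3 : (ε / (c + 1)) * c ≤ ε := by
      rw [div_mul_eq_mul_div, div_le_iff₀ (by linarith)]
      nlinarith
    linarith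
  linarith

end FGMaux2

set_option maxHeartbeats 1000000 in
/-- convergence rate of the fast gradient method (Algorithm 1):
`f(y^N) − f(y*) ≤ 8·L·R²/(N+1)²` with `R² = (1/2)·‖y⁰ − y*‖²`. -/
theorem min_min_statement_7 {n : ℕ} (Q : Set (EuclideanSpace ℝ (Fin n)))
    (hQne : Q.Nonempty) (hQcomp : IsCompact Q) (hQconv : Convex ℝ Q)
    (f : EuclideanSpace ℝ (Fin n) → ℝ)
    (f' : EuclideanSpace ℝ (Fin n) → EuclideanSpace ℝ (Fin n))
    (hdiff : ∀ y, HasGradientAt f (f' y) y)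
    (hconv : ConvexOn ℝ Set.univ f)
    (L : ℝ) (hL : 0 < L)
    (hsmooth : ∀ y ∈ Q, ∀ z ∈ Q, ‖f' y - f' z‖ ≤ L * ‖y - z‖)
    (ystar : EuclideanSpace ℝ (Fin n)) (hystar : ystar ∈ Q)
    (hmin : ∀ y ∈ Q, f ystar ≤ f y)
    (N : ℕ) (hN : 1 ≤ N)
    (y z u : ℕ → EuclideanSpace ℝ (Fin n)) (α A : ℕ → ℝ)
    (hyQ : ∀ k ≤ N, y k ∈ Q) (hzQ : ∀ k ≤ N, z k ∈ Q) (huQ : ∀ k ≤ N, u k ∈ Q)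
    (hz0 : z 0 = y 0) (hu0 : u 0 = y 0) (hα0 : α 0 = 0) (hA0 : A 0 = 0)
    (hα : ∀ k < N, α (k + 1) = (1 + Real.sqrt (1 + 4 * L * A k)) / (2 * L))
    (hA : ∀ k < N, A (k + 1) = A k + α (k + 1))
    (hz : ∀ k < N, z (k + 1) = (A (k + 1))⁻¹ • (α (k + 1) • u k + A k • y k))
    (hu : ∀ k < N, u (k + 1) ∈ Q ∧ ∀ v ∈ Q,
      α (k + 1) * ⟪f' (z (k + 1)), u (k + 1) - z (k + 1)⟫ + 1 / 2 * ‖u (k + 1) - u k‖ ^ 2 ≤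
        α (k + 1) * ⟪f' (z (k + 1)), v - z (k + 1)⟫ + 1 / 2 * ‖v - u k‖ ^ 2)
    (hy : ∀ k < N, y (k + 1) = (A (k + 1))⁻¹ • (α (k + 1) • u (k + 1) + A k • y k))
    (R : ℝ) (hR : R ^ 2 = 1 / 2 * ‖y 0 - ystar‖ ^ 2) :
    f (y N) - f ystar ≤ 8 * L * R ^ 2 / ((N : ℝ) + 1) ^ 2 := by
  -- basic positivity facts
  have hαpos : ∀ k < N, 0 < α (k + 1) := by
    intro k hk
    rw [hα k hk]
    have h := Real.sqrt_nonneg (1 + 4 * L * A k)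
    positivity
  have hAnn : ∀ k, k ≤ N → 0 ≤ A k := by
    intro k
    induction k with
    | zero => intro _; rw [hA0]
    | succ m ih =>
      intro hm
      have hm' : m < N := hm
      rw [hA m hm']
      have h1 := hαpos m hm'
      have h2 := ih hm'.le
      linarith
  have hA1pos : ∀ k < N, 0 < A (k + 1) := by
    intro k hk
    rw [hA k hk]
    linarith [hAnn k hk.le, hαpos k hk]
  have hLα : ∀ k < N, L * α (k + 1) ^ 2 = A (k + 1) := by
    intro k hk
    have h4 : 0 ≤ 1 + 4 * L * A k := by
      have := mul_nonneg hL.le (hAnn k hk.le)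
      linarith
    have hs : Real.sqrt (1 + 4 * L * A k) ^ 2 = 1 + 4 * L * A k := Real.sq_sqrt h4
    have aeq : 2 * L * α (k + 1) = 1 + Real.sqrt (1 + 4 * L * A k) := by
      rw [hα k hk]
      field_simp
    rw [hA k hk]
    have h4L : (4 * L) * (L * α (k + 1) ^ 2) = (4 * L) * (A k + α (k + 1)) := by
      linear_combination hs + (2 * L * α (k + 1) - 1 + Real.sqrt (1 + 4 * L * A k)) * aeq
    exact mul_left_cancel₀ (by positivity) h4L
  -- growth of A
  have hgrow : ∀ k, 1 ≤ k → k ≤ N → ((k : ℝ) + 1) ^ 2 / (8 * L) ≤ A k := by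
    intro k
    induction k with
    | zero => omega
    | succ m ih =>
      intro _ hm1
      have hmN : m < N := hm1
      by_cases hm : m = 0
      · subst hm
        rw [hA 0 hmN, hα 0 hmN, hA0]
        have h1 : (1 : ℝ) + 4 * L * 0 = 1 := by ring
        rw [h1, Real.sqrt_one]
        rw [div_le_iff₀ (by positivity)]
        have he : (0 + (1 + 1) / (2 * L)) * (8 * L) = 8 := by
          field_simp
          ring
        rw [he]
        push_cast
        norm_num
      · have hm1' : 1 ≤ m := Nat.one_le_iff_ne_zero.mpr hm
        have ihm := ih hm1' hmN.le
        have ihm' : ((m : ℝ) + 1) ^ 2 ≤ A m * (8 * L) := (div_le_iff₀ (by positivity)).mp ihm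
        have hm1r : (1 : ℝ) ≤ (m : ℝ) := by exact_mod_cast hm1'
        have hs : (2 * (m : ℝ) - 1) / 4 ≤ Real.sqrt (1 + 4 * L * A m) := by
          have hnn : (0:ℝ) ≤ 1 + 4 * L * A m := by
            have := mul_nonneg hL.le (hAnn m hmN.le)
            linarith
          rw [Real.le_sqrt (by linarith) hnn]
          nlinarith [ihm']
        rw [hA m hmN, hα m hmN]
        rw [div_le_iff₀ (by positivity : (0:ℝ) < 8 * L)]
        have hexp : (A m + (1 + Real.sqrt (1 + 4 * L * A m)) / (2 * L)) * (8 * L) =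
            8 * L * A m + 4 * (1 + Real.sqrt (1 + 4 * L * A m)) := by
          field_simp
          ring
        rw [hexp]
        push_cast
        nlinarith [ihm', hs]
  -- the one-step estimate
  have hstep : ∀ k, k < N →
      A (k + 1) * f (y (k + 1)) + 1 / 2 * ‖ystar - u (k + 1)‖ ^ 2 ≤
        A k * f (y k) + α (k + 1) * f ystar + 1 / 2 * ‖ystar - u k‖ ^ 2 := by
    intro k hk
    have hk1 : k + 1 ≤ N := hk
    have ha := hαpos k hk
    have hAk := hAnn k hk.le
    have hA1 := hA1pos k hk
    have hzQ1 : z (k + 1) ∈ Q := hzQ _ hk1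
    have hyQ1 : y (k + 1) ∈ Q := hyQ _ hk1
    have huQ1 : u (k + 1) ∈ Q := huQ _ hk1
    have huQ0 : u k ∈ Q := huQ _ hk.le
    have hyQk : y k ∈ Q := hyQ _ hk.le
    have d1 := fgm_descent Q hQconv f f' hdiff L hL hsmooth (z (k + 1)) (y (k + 1)) hzQ1 hyQ1
    have hyz : y (k + 1) - z (k + 1) = (α (k + 1) / A (k + 1)) • (u (k + 1) - u k) := by
      rw [hy k hk, hz k hk, div_eq_mul_inv]
      module
    have e1 : ⟪f' (z (k + 1)), y (k + 1) - z (k + 1)⟫ =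
        α (k + 1) / A (k + 1) * ⟪f' (z (k + 1)), u (k + 1) - u k⟫ := by
      rw [hyz, real_inner_smul_right]
    have e2 : ‖y (k + 1) - z (k + 1)‖ ^ 2 =
        (α (k + 1) / A (k + 1)) ^ 2 * ‖u (k + 1) - u k‖ ^ 2 := by
      rw [hyz, norm_smul, mul_pow, Real.norm_eq_abs, sq_abs]
    have e3 : L * α (k + 1) ^ 2 = A (k + 1) := hLα k hk
    have hc1 : A (k + 1) * (α (k + 1) / A (k + 1)) = α (k + 1) := by
      field_simp
    have hc2 : A (k + 1) * (L / 2 * (α (k + 1) / A (k + 1)) ^ 2) = 1 / 2 := by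
      rw [div_pow]
      field_simp
      linear_combination e3
    have d2 : A (k + 1) * f (y (k + 1)) ≤ A (k + 1) * f (z (k + 1)) +
        α (k + 1) * ⟪f' (z (k + 1)), u (k + 1) - u k⟫ + 1 / 2 * ‖u (k + 1) - u k‖ ^ 2 := by
      have hmul := mul_le_mul_of_nonneg_left d1 hA1.le
      rw [e1, e2] at hmul
      have hc1' : A (k + 1) * (α (k + 1) / A (k + 1) * ⟪f' (z (k + 1)), u (k + 1) - u k⟫) =
          α (k + 1) * ⟪f' (z (k + 1)), u (k + 1) - u k⟫ := by
        rw [← mul_assoc, hc1]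
      have hc2' : A (k + 1) * (L / 2 * ((α (k + 1) / A (k + 1)) ^ 2 * ‖u (k + 1) - u k‖ ^ 2)) =
          1 / 2 * ‖u (k + 1) - u k‖ ^ 2 := by
        rw [show A (k + 1) * (L / 2 * ((α (k + 1) / A (k + 1)) ^ 2 * ‖u (k + 1) - u k‖ ^ 2)) =
          (A (k + 1) * (L / 2 * (α (k + 1) / A (k + 1)) ^ 2)) * ‖u (k + 1) - u k‖ ^ 2 by ring,
          hc2]
      have hexp : A (k + 1) * (f (z (k + 1)) +
          α (k + 1) / A (k + 1) * ⟪f' (z (k + 1)), u (k + 1) - u k⟫ +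
          L / 2 * ((α (k + 1) / A (k + 1)) ^ 2 * ‖u (k + 1) - u k‖ ^ 2)) =
          A (k + 1) * f (z (k + 1)) +
          A (k + 1) * (α (k + 1) / A (k + 1) * ⟪f' (z (k + 1)), u (k + 1) - u k⟫) +
          A (k + 1) * (L / 2 * ((α (k + 1) / A (k + 1)) ^ 2 * ‖u (k + 1) - u k‖ ^ 2)) := by
        ring
      rw [hexp, hc1', hc2'] at hmul
      exact hmul
    have hvsplit : u (k + 1) - u k = (u (k + 1) - z (k + 1)) + (z (k + 1) - u k) := by abel
    have i2 : α (k + 1) * ⟪f' (z (k + 1)), u (k + 1) - u k⟫ =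
        α (k + 1) * ⟪f' (z (k + 1)), u (k + 1) - z (k + 1)⟫ +
        α (k + 1) * ⟪f' (z (k + 1)), z (k + 1) - u k⟫ := by
      rw [hvsplit, inner_add_right]; ring
    have keyv : α (k + 1) • (z (k + 1) - u k) = A k • (y k - z (k + 1)) := by
      have hz' : (A k + α (k + 1)) • z (k + 1) = α (k + 1) • u k + A k • y k := by
        rw [← hA k hk, hz k hk, smul_inv_smul₀ hA1.ne']
      have h := hz'
      rw [add_smul] at h
      rw [smul_sub, smul_sub]
      rw [sub_eq_sub_iff_add_eq_add]
      calc α (k + 1) • z (k + 1) + A k • z (k + 1)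
          = A k • z (k + 1) + α (k + 1) • z (k + 1) := by abel
        _ = α (k + 1) • u k + A k • y k := h
        _ = A k • y k + α (k + 1) • u k := by abel
    have i1 : α (k + 1) * ⟪f' (z (k + 1)), z (k + 1) - u k⟫ =
        A k * ⟪f' (z (k + 1)), y k - z (k + 1)⟫ := by
      rw [← real_inner_smul_right, ← real_inner_smul_right, keyv]
    have p1 := fgm_strong_min Q hQconv (f' (z (k + 1))) (u k) (z (k + 1)) (u (k + 1))
      (α (k + 1)) (hu k hk).1 (fun v hv => (hu k hk).2 v hv) ystar hystar
    have c1 := fgm_grad_ineq f f' hdiff hconv (z (k + 1)) (y k)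
    have c2 := fgm_grad_ineq f f' hdiff hconv (z (k + 1)) ystar
    have c1' : A k * f (z (k + 1)) + A k * ⟪f' (z (k + 1)), y k - z (k + 1)⟫ ≤
        A k * f (y k) := by
      have := mul_le_mul_of_nonneg_left c1 hAk
      rw [mul_add] at this
      exact this
    have c2' : α (k + 1) * f (z (k + 1)) + α (k + 1) * ⟪f' (z (k + 1)), ystar - z (k + 1)⟫ ≤
        α (k + 1) * f ystar := by
      have := mul_le_mul_of_nonneg_left c2 ha.le
      rw [mul_add] at this
      exact this
    have e5 : A (k + 1) * f (z (k + 1)) =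
        A k * f (z (k + 1)) + α (k + 1) * f (z (k + 1)) := by
      rw [hA k hk]; ring
    linarith [d2, i2, i1, p1, c1', c2', e5]
  -- telescoping
  have htel : ∀ k, k ≤ N → A k * f (y k) + 1 / 2 * ‖ystar - u k‖ ^ 2 ≤
      A k * f ystar + 1 / 2 * ‖ystar - u 0‖ ^ 2 := by
    intro k
    induction k with
    | zero => intro _; rw [hA0]; norm_num
    | succ m ih =>
      intro hm
      have hmN : m < N := hm
      have h1 := hstep m hmN
      have h2 := ih hmN.le
      have e : A (m + 1) * f ystar = A m * f ystar + α (m + 1) * f ystar := by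
        rw [hA m hmN]; ring
      linarith [h1, h2, e]
  -- conclusion
  have hfin := htel N le_rfl
  have hANlb := hgrow N hN le_rfl
  have hANpos : 0 < A N := lt_of_lt_of_le (by positivity) hANlb
  have hfge : 0 ≤ f (y N) - f ystar := by linarith [hmin (y N) (hyQ N le_rfl)]
  have hRnn : 0 ≤ R ^ 2 := by rw [hR]; positivity
  have h1 : A N * (f (y N) - f ystar) ≤ R ^ 2 := by
    have hnorm : ‖ystar - u 0‖ = ‖y 0 - ystar‖ := by rw [hu0, norm_sub_rev]
    have hR' : 1 / 2 * ‖ystar - u 0‖ ^ 2 = R ^ 2 := by rw [hnorm, hR]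
    have he2 : A N * (f (y N) - f ystar) = A N * f (y N) - A N * f ystar := by ring
    linarith [hfin, sq_nonneg ‖ystar - u N‖, hR', he2]
  rw [le_div_iff₀ (by positivity)]
  have h2 : ((N : ℝ) + 1) ^ 2 ≤ 8 * L * A N := by
    have h := (div_le_iff₀ (by positivity : (0:ℝ) < 8 * L)).mp hANlb
    have he : A N * (8 * L) = 8 * L * A N := by ring
    linarith [h, he]
  have h3 := mul_le_mul_of_nonneg_left h2 hfge
  have h4 := mul_le_mul_of_nonneg_left h1 (by positivity : (0:ℝ) ≤ 8 * L)
  have he : (f (y N) - f ystar) * (8 * L * A N) = 8 * L * (A N * (f (y N) - f ystar)) := by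
    ring
  linarith [h3, h4, he]
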